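/- A topological H₂-module (X, τ) is H₂-normable (i.e. there exists an H₂-valued norm N on X such that the balls {y ∈ X : N(y − x) ≺ ε}, for x ∈ X and ε ∈ D with 0 ≺ ε, form a basis of the topology τ) if and only if X contains a bounded H₂-convex neighbourhood of 0. -/

import Mathlib

open Pointwise

/-- The ring of bihyperbolic numbers in its idempotent representation:
componentwise operations on `Fin 4 → ℝ`. -/
abbrev D : Type := Fin 4 → ℝ

/-- The idempotents `eᵢ`. -/
noncomputable def e (i : Fin 4) : D := Pi.single i 1

/-- The bihyperbolic-valued modulus: componentwise absolute value. -/
def dabs (a : D) : D := fun i => |a i|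

/-- Strict componentwise inequality `a ≺ b`. -/
def sLt (a b : D) : Prop := ∀ i, a i < b i

/-- The ring homomorphism `ℝ → D` sending `r` to the constant function `r`. -/
def rconst (a : ℝ) : D := fun _ => a

/-- A set `B` in an `H₂`-module is `H₂`-balanced if `c • x ∈ B` whenever
`x ∈ B` and `|c| ⪯ 1`. -/
def H2Balanced {X : Type*} [AddCommGroup X] [Module D X] (B : Set X) : Prop :=
  ∀ x ∈ B, ∀ c : D, dabs c ≤ 1 → c • x ∈ B

/-- A set `B` in an `H₂`-module is `H₂`-convex if `c • x + (1 - c) • y ∈ B`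
for all `x, y ∈ B` and `0 ⪯ c ⪯ 1`. -/
def H2Convex {X : Type*} [AddCommGroup X] [Module D X] (B : Set X) : Prop :=
  ∀ x ∈ B, ∀ y ∈ B, ∀ c : D, 0 ≤ c → c ≤ 1 → c • x + (1 - c) • y ∈ B

/-- A set `B` in an `H₂`-module is `H₂`-absorbing if every `x` admits `ε ≻ 0`
with `c • x ∈ B` whenever `0 ⪯ c ⪯ ε`. -/
def H2Absorbing {X : Type*} [AddCommGroup X] [Module D X] (B : Set X) : Prop :=
  ∀ x : X, ∃ ε : D, sLt 0 ε ∧ ∀ c : D, 0 ≤ c → c ≤ ε → c • x ∈ B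

/-- An `H₂`-valued seminorm. -/
def IsH2Seminorm {X : Type*} [AddCommGroup X] [Module D X] (p : X → D) : Prop :=
  (∀ c : D, ∀ x : X, p (c • x) = dabs c * p x) ∧ ∀ x y : X, p (x + y) ≤ p x + p y

/-- An `H₂`-valued norm. -/
def IsH2Norm {X : Type*} [AddCommGroup X] [Module D X] (N : X → D) : Prop :=
  (∀ x : X, N x = 0 ↔ x = 0) ∧ (∀ c : D, ∀ x : X, N (c • x) = dabs c * N x) ∧
    ∀ x y : X, N (x + y) ≤ N x + N y

/-- A subset of a topological `H₂`-module is bounded if every neighbourhood of `0`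
absorbs it. -/
def H2Bounded {X : Type*} [AddCommGroup X] [Module D X] [TopologicalSpace X]
    (B : Set X) : Prop :=
  ∀ U ∈ nhds (0 : X), ∃ c : D, sLt 0 c ∧ B ⊆ c • U

/-- The `H₂`-valued Minkowski functional of a set `B`, defined componentwise. -/
noncomputable def minkowski {X : Type*} [AddCommGroup X] [Module D X]
    (B : Set X) (x : X) : D :=
  fun i => sInf {t : ℝ | ∃ α : D, sLt 0 α ∧ x ∈ α • B ∧ α i = t}

namespace H2aux

noncomputable def Dinv (c : D) : D := fun i => (c i)⁻¹

lemma dLe_def {a b : D} : a ≤ b ↔ ∀ i, a i ≤ b i := Pi.le_def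

lemma Dinv_pos {c : D} (h : sLt 0 c) : sLt 0 (Dinv c) := fun i => by
  have := h i; simp only [Pi.zero_apply] at this ⊢; exact inv_pos.mpr this

lemma Dinv_mul {c : D} (h : sLt 0 c) : Dinv c * c = 1 :=
  funext fun i => inv_mul_cancel₀ (ne_of_gt (by simpa using h i))

lemma Dinv_Dinv {c : D} (h : sLt 0 c) : Dinv (Dinv c) = c :=
  funext fun i => inv_inv (c i)

variable {X : Type*} [AddCommGroup X] [Module D X]

lemma mem_smul_iff {c : D} (hc : sLt 0 c) {S : Set X} {x : X} :
    x ∈ c • S ↔ Dinv c • x ∈ S := by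
  constructor
  · rintro ⟨y, hy, rfl⟩
    rwa [smul_smul, Dinv_mul hc, one_smul]
  · intro h
    exact ⟨Dinv c • x, h, by
      show c • Dinv c • x = x
      rw [smul_smul, mul_comm, Dinv_mul hc, one_smul]⟩

/-- `x` is absorbed by `A` at scale `α`. -/
def InS (A : Set X) (x : X) (α : D) : Prop := sLt 0 α ∧ x ∈ α • A

lemma InS.memA {A : Set X} {x : X} {α : D} (h : InS A x α) : Dinv α • x ∈ A :=
  (mem_smul_iff h.1).mp h.2

lemma InS.of_memA {A : Set X} {x : X} {α : D} (h1 : sLt 0 α) (h : Dinv α • x ∈ A) :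
    InS A x α := ⟨h1, (mem_smul_iff h1).mpr h⟩

/-- General mixing lemma with a 0-1 coefficient vector. -/
lemma mix {A : Set X} (hconv : H2Convex A) {y z : X} {α β : D}
    (hy : InS A y α) (hz : InS A z β) (c : D) (hc : ∀ i, c i = 0 ∨ c i = 1) :
    InS A (c • y + (1 - c) • z) (fun i => c i * α i + (1 - c i) * β i) := by
  set γ : D := fun i => c i * α i + (1 - c i) * β i with hγdef
  have hγ : sLt 0 γ := by
    intro i
    rcases hc i with h | h <;>
      simp only [hγdef, Pi.zero_apply, h] <;> [simpa using hz.1 i; simpa using hy.1 i]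
  apply InS.of_memA hγ
  have key : Dinv γ • (c • y + (1 - c) • z)
      = c • (Dinv α • y) + (1 - c) • (Dinv β • z) := by
    rw [smul_add, smul_smul, smul_smul, smul_smul, smul_smul]
    congr 1
    · congr 1
      funext i
      rcases hc i with h | h <;>
        simp [hγdef, Dinv, h]
    · congr 1
      funext i
      rcases hc i with h | h <;>
        simp [hγdef, Dinv, h]
  rw [key]
  refine hconv _ hy.memA _ hz.memA c ?_ ?_
  · exact Pi.le_def.mpr fun i => by rcases hc i with h | h <;> simp [h]
  · exact Pi.le_def.mpr fun i => by rcases hc i with h | h <;> simp [h]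

lemma add_mem {A : Set X} (hconv : H2Convex A) {x y : X} {α β : D}
    (hx : InS A x α) (hy : InS A y β) : InS A (x + y) (α + β) := by
  have hαβ : sLt 0 (α + β) := fun i => by
    have := hx.1 i; have := hy.1 i
    simp only [Pi.add_apply, Pi.zero_apply] at *; linarith
  apply InS.of_memA hαβ
  set c : D := fun i => α i / (α i + β i) with hcdef
  have h1c : (1 : D) - c = fun i => β i / (α i + β i) := by
    funext i
    have h1 := hx.1 i; have h2 := hy.1 i
    simp only [Pi.zero_apply] at h1 h2
    simp only [Pi.sub_apply, Pi.one_apply, hcdef]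
    field_simp
    ring
  have key : Dinv (α + β) • (x + y) = c • (Dinv α • x) + (1 - c) • (Dinv β • y) := by
    rw [smul_add, smul_smul, smul_smul]
    congr 1
    · congr 1
      funext i
      have h1 := hx.1 i; have h2 := hy.1 i
      simp only [Pi.zero_apply] at h1 h2
      simp only [Pi.mul_apply, Dinv, Pi.add_apply, hcdef]
      field_simp
    · congr 1
      funext i
      have h1 := hx.1 i; have h2 := hy.1 i
      simp only [Pi.zero_apply] at h1 h2
      simp only [Pi.mul_apply, Dinv, Pi.add_apply, h1c]
      field_simp
  rw [key]
  refine hconv _ hx.memA _ hy.memA c ?_ ?_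
  · refine Pi.le_def.mpr fun i => ?_
    have h1 := hx.1 i; have h2 := hy.1 i
    simp only [Pi.zero_apply] at h1 h2 ⊢
    simp only [hcdef]
    positivity
  · refine Pi.le_def.mpr fun i => ?_
    have h1 := hx.1 i; have h2 := hy.1 i
    simp only [Pi.zero_apply] at h1 h2
    simp only [hcdef, Pi.one_apply]
    rw [div_le_one (by linarith)]
    linarith

end H2aux




namespace H2aux
variable {X : Type*} [AddCommGroup X] [Module D X]

/-- Diagonal mixing: combine four absorption witnesses into one, taking the
`i`-th component from the `i`-th witness. -/
lemma diag {A : Set X} (hconv : H2Convex A) {x : X} {α : Fin 4 → D}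
    (h : ∀ i, InS A x (α i)) : InS A x (fun i => α i i) := by
  have hxx : ∀ c : D, c • x + (1 - c) • x = x := fun c => by
    rw [← add_smul, show c + (1 - c) = (1 : D) by ring, one_smul]
  have h01 := mix hconv (h 0) (h 1) (fun j => if j = 0 then 1 else 0)
    (fun j => by by_cases hj : j = 0 <;> simp [hj])
  rw [hxx] at h01
  have h012 := mix hconv h01 (h 2) (fun j => if j.val ≤ 1 then 1 else 0)
    (fun j => by by_cases hj : j.val ≤ 1 <;> simp [hj])
  rw [hxx] at h012
  have h0123 := mix hconv h012 (h 3) (fun j => if j.val ≤ 2 then 1 else 0)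
    (fun j => by by_cases hj : j.val ≤ 2 <;> simp [hj])
  rw [hxx] at h0123
  have heq : (fun i => (if i.val ≤ 2 then (1:ℝ) else 0) *
      ((if i.val ≤ 1 then (1:ℝ) else 0) *
        ((if i = 0 then (1:ℝ) else 0) * α 0 i + (1 - if i = 0 then (1:ℝ) else 0) * α 1 i)
        + (1 - if i.val ≤ 1 then (1:ℝ) else 0) * α 2 i)
      + (1 - if i.val ≤ 2 then (1:ℝ) else 0) * α 3 i) = (fun i => α i i) := by
    funext i
    fin_cases i <;> norm_num <;> rfl
  rwa [heq] at h0123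

/-- The set whose infimum defines the `i`-th component of the Minkowski functional. -/
def S (A : Set X) (i : Fin 4) (x : X) : Set ℝ :=
  {t : ℝ | ∃ α : D, sLt 0 α ∧ x ∈ α • A ∧ α i = t}

lemma mem_S_iff {A : Set X} {i : Fin 4} {x : X} {t : ℝ} :
    t ∈ S A i x ↔ ∃ α : D, InS A x α ∧ α i = t := by
  constructor
  · rintro ⟨α, h1, h2, h3⟩; exact ⟨α, ⟨h1, h2⟩, h3⟩
  · rintro ⟨α, ⟨h1, h2⟩, h3⟩; exact ⟨α, h1, h2, h3⟩

lemma S_pos {A : Set X} {i : Fin 4} {x : X} {t : ℝ} (h : t ∈ S A i x) : 0 < t := by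
  obtain ⟨α, h1, -, h3⟩ := h
  have := h1 i; rw [h3] at this; simpa using this

lemma S_bddBelow (A : Set X) (i : Fin 4) (x : X) : BddBelow (S A i x) :=
  ⟨0, fun t ht => (S_pos ht).le⟩

lemma minkowski_eq (A : Set X) (x : X) (i : Fin 4) :
    minkowski A x i = sInf (S A i x) := rfl

lemma mink_le {A : Set X} {x : X} {α : D} (h : InS A x α) (i : Fin 4) :
    minkowski A x i ≤ α i :=
  csInf_le (S_bddBelow A i x) (mem_S_iff.mpr ⟨α, h, rfl⟩)

lemma mink_nonneg {A : Set X} {x : X} (hne : ∃ α : D, InS A x α) (i : Fin 4) :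
    0 ≤ minkowski A x i := by
  obtain ⟨α, hα⟩ := hne
  exact le_csInf ⟨α i, mem_S_iff.mpr ⟨α, hα, rfl⟩⟩ fun t ht => (S_pos ht).le

lemma mink_exists_lt {A : Set X} {x : X} (hne : ∃ α : D, InS A x α) {i : Fin 4}
    {r : ℝ} (h : minkowski A x i < r) : ∃ α : D, InS A x α ∧ α i < r := by
  obtain ⟨β, hβ⟩ := hne
  obtain ⟨t, ht, htr⟩ := exists_lt_of_csInf_lt ⟨β i, mem_S_iff.mpr ⟨β, hβ, rfl⟩⟩ h
  obtain ⟨α, hα, rfl⟩ := mem_S_iff.mp ht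
  exact ⟨α, hα, htr⟩

lemma mink_zero {A : Set X} (h0 : (0:X) ∈ A) (i : Fin 4) :
    minkowski A (0 : X) i = 0 := by
  have hsub : Set.Ioi (0:ℝ) ⊆ S A i 0 := by
    intro t ht
    refine mem_S_iff.mpr ⟨fun _ => t, ⟨fun j => by simpa using ht, ?_⟩, rfl⟩
    rw [mem_smul_iff (fun j => by simpa using ht)]
    simpa using h0
  have hup : minkowski A (0:X) i ≤ 0 := by
    have := csInf_le_csInf (S_bddBelow A i 0) ⟨1, Set.mem_Ioi.mpr one_pos⟩ hsub
    rwa [csInf_Ioi] at this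
  have hdown : 0 ≤ minkowski A (0:X) i :=
    le_csInf ⟨1, hsub (Set.mem_Ioi.mpr one_pos)⟩ fun t ht => (S_pos ht).le
  linarith

end H2aux

namespace H2aux
variable {X : Type*} [AddCommGroup X] [Module D X]

lemma Dinv_mul' (a b : D) : Dinv (a * b) = Dinv a * Dinv b :=
  funext fun i => mul_inv (a i) (b i)

lemma Dinv_Dinv' (c : D) : Dinv (Dinv c) = c := funext fun i => inv_inv (c i)

lemma e_zero_one (i j : Fin 4) : e i j = 0 ∨ e i j = 1 := by
  by_cases hj : j = i <;> simp [e, Pi.single_apply, hj]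

lemma dabs_e_le (i : Fin 4) : dabs (e i) ≤ 1 := by
  refine Pi.le_def.mpr fun j => ?_
  rcases e_zero_one i j with h | h <;> simp [dabs, h]

lemma e_mul_e (i : Fin 4) : e i * e i = e i := by
  funext j
  rcases e_zero_one i j with h | h <;> simp [h]

/-- The `i`-th absorption set only depends on the `eᵢ`-component. -/
lemma S_e {A : Set X} (hbal : H2Balanced A) (hconv : H2Convex A) {x : X}
    (hne : ∃ α : D, InS A x α) (i : Fin 4) : S A i (e i • x) = S A i x := by
  ext t
  simp only [mem_S_iff]
  constructor
  · rintro ⟨α, hα, rfl⟩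
    obtain ⟨β, hβ⟩ := hne
    have hmix := mix hconv hα hβ (e i) (e_zero_one i)
    have hpt : e i • (e i • x) + (1 - e i) • x = x := by
      rw [smul_smul, e_mul_e, ← add_smul, show e i + (1 - e i) = (1:D) by ring, one_smul]
    rw [hpt] at hmix
    exact ⟨_, hmix, by simp [e, Pi.single_eq_same]⟩
  · rintro ⟨α, hα, rfl⟩
    refine ⟨α, InS.of_memA hα.1 ?_, rfl⟩
    have : Dinv α • (e i • x) = e i • (Dinv α • x) := by
      rw [smul_smul, mul_comm, ← smul_smul]
    rw [this]
    exact hbal _ hα.memA (e i) (dabs_e_le i)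

/-- Scaling by an everywhere-nonzero scalar. -/
lemma S_smul {A : Set X} (hbal : H2Balanced A) {c : D} (hc : ∀ j, c j ≠ 0)
    (x : X) (i : Fin 4) : S A i (c • x) = |c i| • S A i x := by
  have hu : dabs (Dinv (dabs c) * c) ≤ 1 := by
    refine Pi.le_def.mpr fun j => ?_
    have h1 : |(Dinv (dabs c) * c) j| = 1 := by
      simp only [Pi.mul_apply, Dinv, dabs, abs_mul, abs_inv, abs_abs]
      rw [inv_mul_cancel₀ (abs_ne_zero.mpr (hc j))]
    simpa [dabs] using le_of_eq h1
  ext t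
  simp only [mem_S_iff]
  constructor
  · rintro ⟨α, hα, rfl⟩
    have hpos : sLt 0 (Dinv (dabs c) * α) := by
      intro j
      have h1 := hα.1 j
      have h2 : 0 < |c j| := abs_pos.mpr (hc j)
      simp only [Pi.zero_apply, Pi.mul_apply, Dinv, dabs] at h1 ⊢
      positivity
    have hmemA : Dinv (Dinv (dabs c) * α) • x ∈ A := by
      have hmem := hα.memA
      rw [smul_smul] at hmem
      have hb := hbal _ hmem (Dinv (dabs c) * c) hu
      rw [smul_smul] at hb
      convert hb using 2
      rw [Dinv_mul', Dinv_Dinv']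
      funext j
      have h2 : |c j| ≠ 0 := abs_ne_zero.mpr (hc j)
      simp only [Pi.mul_apply, Dinv, dabs]
      rcases abs_cases (c j) with ⟨h, -⟩ | ⟨h, -⟩ <;> rw [h] <;>
        field_simp [hc j] <;> ring
    refine Set.mem_smul_set.mpr
      ⟨(Dinv (dabs c) * α) i,
        mem_S_iff.mpr ⟨Dinv (dabs c) * α, InS.of_memA hpos hmemA, rfl⟩, ?_⟩
    have h2 : |c i| ≠ 0 := abs_ne_zero.mpr (hc i)
    simp only [Pi.mul_apply, Dinv, dabs, smul_eq_mul]
    field_simp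
  · intro ht
    obtain ⟨s, hs, rfl⟩ := Set.mem_smul_set.mp ht
    obtain ⟨β, hβ, rfl⟩ := mem_S_iff.mp hs
    have hpos : sLt 0 (dabs c * β) := by
      intro j
      have h1 := hβ.1 j
      have h2 : 0 < |c j| := abs_pos.mpr (hc j)
      simp only [Pi.zero_apply, Pi.mul_apply, dabs] at h1 ⊢
      positivity
    refine ⟨dabs c * β, InS.of_memA hpos ?_, by simp [dabs, smul_eq_mul]⟩
    have heq : Dinv (dabs c * β) • (c • x) = (Dinv (dabs c) * c) • (Dinv β • x) := by
      rw [smul_smul, smul_smul, Dinv_mul']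
      congr 1
      ring
    rw [heq]
    exact hbal _ hβ.memA _ hu

end H2aux

namespace H2aux
variable {X : Type*} [AddCommGroup X] [Module D X]

lemma mink_e {A : Set X} (hbal : H2Balanced A) (hconv : H2Convex A) {x : X}
    (hne : ∃ α : D, InS A x α) (i : Fin 4) :
    minkowski A (e i • x) i = minkowski A x i := by
  rw [minkowski_eq, minkowski_eq, S_e hbal hconv hne]

lemma mink_smul_nz {A : Set X} (hbal : H2Balanced A) {c : D} (hc : ∀ j, c j ≠ 0)
    (x : X) (i : Fin 4) :
    minkowski A (c • x) i = |c i| * minkowski A x i := by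
  rw [minkowski_eq, minkowski_eq, S_smul hbal hc, Real.sInf_smul_of_nonneg (abs_nonneg _)]
  rfl

/-- Full `H₂`-homogeneity of the Minkowski functional. -/
lemma mink_homog {A : Set X} (hbal : H2Balanced A) (hconv : H2Convex A)
    (h0 : (0:X) ∈ A) (habs : ∀ y : X, ∃ α : D, InS A y α) (c : D) (x : X) (i : Fin 4) :
    minkowski A (c • x) i = |c i| * minkowski A x i := by
  by_cases hci : c i = 0
  · have h1 : minkowski A (c • x) i = minkowski A (e i • (c • x)) i :=
      (mink_e hbal hconv (habs _) i).symm
    have h2 : e i • (c • x) = (0 : X) := by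
      rw [smul_smul]
      have : e i * c = 0 := by
        funext j
        by_cases hj : j = i <;> simp [e, Pi.single_apply, hj, hci]
      rw [this, zero_smul]
    rw [h1, h2, mink_zero h0, hci, abs_zero, zero_mul]
  · set c' : D := fun j => if c j = 0 then 1 else c j with hc'def
    have hc' : ∀ j, c' j ≠ 0 := by
      intro j
      simp only [hc'def]
      split_ifs with h <;> simp [h]
    have hee : e i * c = e i * c' := by
      funext j
      by_cases hj : j = i
      · subst hj
        simp [e, Pi.single_eq_same, hc'def, hci]
      · simp [e, Pi.single_apply, hj]
    calc minkowski A (c • x) i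
        = minkowski A (e i • (c • x)) i := (mink_e hbal hconv (habs _) i).symm
      _ = minkowski A (e i • (c' • x)) i := by rw [smul_smul, smul_smul, hee]
      _ = minkowski A (c' • x) i := mink_e hbal hconv (habs _) i
      _ = |c' i| * minkowski A x i := mink_smul_nz hbal hc' x i
      _ = |c i| * minkowski A x i := by simp [hc'def, hci]

/-- Triangle inequality for the Minkowski functional. -/
lemma mink_add {A : Set X} (hconv : H2Convex A)
    (habs : ∀ y : X, ∃ α : D, InS A y α) (x y : X) (i : Fin 4) :
    minkowski A (x + y) i ≤ minkowski A x i + minkowski A y i := by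
  refine le_of_forall_pos_le_add fun ε hε => ?_
  obtain ⟨α, hα, hαi⟩ := mink_exists_lt (habs x) (i := i)
    (r := minkowski A x i + ε / 2) (by linarith)
  obtain ⟨β, hβ, hβi⟩ := mink_exists_lt (habs y) (i := i)
    (r := minkowski A y i + ε / 2) (by linarith)
  have hsum := add_mem hconv hα hβ
  have := mink_le hsum i
  simp only [Pi.add_apply] at this
  linarith

end H2aux

namespace H2aux
variable {X : Type*} [AddCommGroup X] [Module D X] [TopologicalSpace X]
  [ContinuousSMul D X]

lemma smul_set_mem_nhds {c : D} (hc : sLt 0 c) {U : Set X} (hU : U ∈ nhds (0:X)) :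
    c • U ∈ nhds (0 : X) := by
  have hcont : Continuous fun x : X => Dinv c • x := continuous_const.smul continuous_id
  have heq : c • U = (fun x : X => Dinv c • x) ⁻¹' U := by
    ext z; exact mem_smul_iff hc
  rw [heq]
  have h0 : Dinv c • (0 : X) = 0 := smul_zero _
  exact hcont.continuousAt.preimage_mem_nhds (by rwa [h0])

lemma exists_InS_of_nhds {A : Set X} (hA : A ∈ nhds (0:X)) (x : X) :
    ∃ α : D, InS A x α := by
  have hcont : ContinuousAt (fun c : D => c • x) 0 :=
    (continuous_id.smul continuous_const).continuousAt
  have h0 : (fun c : D => c • x) 0 = 0 := zero_smul D x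
  have hpre : (fun c : D => c • x) ⁻¹' A ∈ nhds (0 : D) :=
    hcont.preimage_mem_nhds (by rwa [zero_smul])
  obtain ⟨ε, hε, hball⟩ := Metric.mem_nhds_iff.mp hpre
  set c : D := rconst (ε / 2) with hcdef
  have hcpos : sLt 0 c := fun j => by simpa [hcdef, rconst] using half_pos hε
  have hcball : c ∈ Metric.ball (0 : D) ε := by
    rw [Metric.mem_ball, dist_zero_right]
    have h1 : ‖c‖ ≤ ε / 2 := by
      refine pi_norm_le_iff_of_nonneg (by linarith) |>.mpr fun j => ?_
      simp only [hcdef, rconst, Real.norm_eq_abs]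
      exact le_of_eq (abs_of_pos (half_pos hε))
    linarith
  have hcx : c • x ∈ A := hball hcball
  refine ⟨Dinv c, Dinv_pos hcpos, ?_⟩
  rw [mem_smul_iff (Dinv_pos hcpos), Dinv_Dinv']
  exact hcx

lemma exists_balanced_nhds {U : Set X} (hU : U ∈ nhds (0:X)) :
    ∃ W ∈ nhds (0:X), W ⊆ U ∧ H2Balanced W := by
  have hcont : ContinuousAt (fun p : D × X => p.1 • p.2) (0, 0) :=
    continuous_smul.continuousAt
  have h0 : (fun p : D × X => p.1 • p.2) (0, 0) = 0 := zero_smul D (0:X)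
  have hpre : (fun p : D × X => p.1 • p.2) ⁻¹' U ∈ nhds ((0:D), (0:X)) :=
    hcont.preimage_mem_nhds (by simpa using hU)
  rw [mem_nhds_prod_iff] at hpre
  obtain ⟨s, hs, V, hV, hsV⟩ := hpre
  obtain ⟨ε, hε, hball⟩ := Metric.mem_nhds_iff.mp hs
  refine ⟨{w : X | ∃ c : D, ∃ v ∈ V, (∀ j, |c j| ≤ ε / 2) ∧ w = c • v}, ?_, ?_, ?_⟩
  · refine Filter.mem_of_superset (smul_set_mem_nhds (c := rconst (ε/2))
      (fun j => by simpa [rconst] using half_pos hε) hV) ?_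
    rintro w ⟨v, hv, rfl⟩
    exact ⟨rconst (ε/2), v, hv, fun j => by
      simp [rconst, abs_of_pos (half_pos hε)], rfl⟩
  · rintro w ⟨c, v, hv, hc, rfl⟩
    have hcball : c ∈ Metric.ball (0 : D) ε := by
      rw [Metric.mem_ball, dist_zero_right]
      have h1 : ‖c‖ ≤ ε / 2 := by
        refine pi_norm_le_iff_of_nonneg (by linarith) |>.mpr fun j => ?_
        simpa [Real.norm_eq_abs] using hc j
      linarith
    exact hsV (Set.mk_mem_prod (hball hcball) hv)
  · rintro w ⟨c, v, hv, hc, rfl⟩ d hd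
    refine ⟨d * c, v, hv, fun j => ?_, by rw [smul_smul]⟩
    have hdj : |d j| ≤ 1 := by simpa [dabs] using Pi.le_def.mp hd j
    calc |(d * c) j| = |d j| * |c j| := by simp [abs_mul]
      _ ≤ 1 * (ε / 2) := by
          refine mul_le_mul hdj (hc j) (abs_nonneg _) zero_le_one
      _ = ε / 2 := one_mul _

end H2aux

namespace H2aux
variable {X : Type*} [AddCommGroup X] [Module D X] [TopologicalSpace X]
  [ContinuousSMul D X]

/-- If all components of the Minkowski functional of `z` are smaller than the
reciprocal absorption constants of a balanced set `W ⊇ (Dinv c) • A`, then `z ∈ W`. -/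
lemma mem_balanced_of_small {A W : Set X} (hconv : H2Convex A) (hA : A ∈ nhds (0:X))
    (hWbal : H2Balanced W) {c : D} (hc : sLt 0 c) (hAc : A ⊆ c • W) {z : X}
    (hz : ∀ i, minkowski A z i < Dinv c i) : z ∈ W := by
  have habs : ∀ y : X, ∃ α : D, InS A y α := exists_InS_of_nhds hA
  have hchoice : ∀ i : Fin 4, ∃ α : D, InS A z α ∧ α i < Dinv c i := fun i =>
    mink_exists_lt (habs z) (hz i)
  choose α hα hαi using hchoice
  have hdiag := diag hconv hα
  set γ : D := fun i => α i i with hγdef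
  have hγpos : sLt 0 γ := hdiag.1
  have hmemA : Dinv γ • z ∈ A := hdiag.memA
  have hmemW : Dinv c • (Dinv γ • z) ∈ W := (mem_smul_iff hc).mp (hAc hmemA)
  have hd : dabs (γ * c) ≤ 1 := by
    refine Pi.le_def.mpr fun j => ?_
    have h1 : (0:ℝ) < γ j := by simpa using hγpos j
    have h2 : (0:ℝ) < c j := by simpa using hc j
    have h3 : γ j < (c j)⁻¹ := by simpa [Dinv] using hαi j
    have h4 : γ j * c j ≤ 1 := by
      rw [← inv_mul_cancel₀ (ne_of_gt h2)]
      exact mul_le_mul_of_nonneg_right h3.le h2.le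
    simp only [dabs, Pi.mul_apply, Pi.one_apply]
    rw [abs_of_pos (mul_pos h1 h2)]
    exact h4
  have := hWbal _ hmemW (γ * c) hd
  have heq : (γ * c) • Dinv c • Dinv γ • z = z := by
    rw [smul_smul, smul_smul]
    have : γ * c * Dinv c * Dinv γ = 1 := by
      funext j
      have h1 : (0:ℝ) < γ j := by simpa using hγpos j
      have h2 : (0:ℝ) < c j := by simpa using hc j
      simp only [Pi.mul_apply, Dinv, Pi.one_apply]
      field_simp
    rw [this, one_smul]
  rwa [heq] at this

lemma mink_definite [T2Space X] {A : Set X} (hbal : H2Balanced A) (hconv : H2Convex A)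
    (hA : A ∈ nhds (0:X)) (hbdd : H2Bounded A) {x : X} (hx : minkowski A x = 0) :
    x = 0 := by
  by_contra hx0
  have hU : {x}ᶜ ∈ nhds (0:X) :=
    isClosed_singleton.isOpen_compl.mem_nhds (by simpa using Ne.symm hx0)
  obtain ⟨W, hW, hWU, hWbal⟩ := exists_balanced_nhds hU
  obtain ⟨c, hc, hAc⟩ := hbdd W hW
  have hxW : x ∈ W := by
    refine mem_balanced_of_small hconv hA hWbal hc hAc fun i => ?_
    have h1 : minkowski A x i = 0 := by rw [hx]; rfl
    rw [h1]
    have h2 : (0:ℝ) < c i := by simpa using hc i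
    simp only [Dinv]
    positivity
  exact (hWU hxW) rfl

/-- The unit-type balls of the Minkowski functional are neighbourhoods of `0`. -/
lemma mink_ball_mem_nhds {A : Set X} (hA : A ∈ nhds (0:X)) {ε : D} (hε : sLt 0 ε) :
    {y : X | sLt (minkowski A y) ε} ∈ nhds (0:X) := by
  have hε2 : sLt 0 (fun i => ε i / 2) := fun i => by
    have := hε i; simp only [Pi.zero_apply] at this ⊢; linarith
  refine Filter.mem_of_superset (smul_set_mem_nhds hε2 hA) fun y hy => ?_
  intro i
  have h1 : minkowski A y i ≤ ε i / 2 := mink_le ⟨hε2, hy⟩ i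
  have h2 := hε i
  simp only [Pi.zero_apply] at h2
  linarith

end H2aux


open H2aux

/-- A topological `H₂`-module is `H₂`-normable (its topology has the balls of some
`H₂`-valued norm as a basis) if and only if it contains a bounded `H₂`-convex
neighbourhood of `0`. -/
theorem normable_iff_bounded_convex_nhd {X : Type*} [AddCommGroup X] [Module D X]
    [TopologicalSpace X] [T2Space X] [ContinuousAdd X] [ContinuousSMul D X] :
    (∃ N : X → D, IsH2Norm N ∧
        TopologicalSpace.IsTopologicalBasis
          {s : Set X | ∃ x : X, ∃ ε : D, sLt 0 ε ∧
            s = {y : X | sLt (N (y - x)) ε}}) ↔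
      ∃ B : Set X, B ∈ nhds (0 : X) ∧ H2Bounded B ∧ H2Convex B := by
  haveI : ContinuousNeg X := ⟨by
    have h : Continuous fun x : X => (-1 : D) • x := continuous_const.smul continuous_id
    simpa [neg_one_smul] using h⟩
  haveI : IsTopologicalAddGroup X :=
    { toContinuousAdd := inferInstance, toContinuousNeg := inferInstance }
  constructor
  · -- Forward: a norm gives a bounded convex neighbourhood, namely the unit ball.
    rintro ⟨N, ⟨hN0, hNh, hNt⟩, hbasis⟩
    have hN0' : N (0 : X) = 0 := (hN0 0).mpr rfl
    have hNneg : ∀ z : X, N (-z) = N z := by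
      intro z
      have h1 := hNh (-1) z
      rw [neg_one_smul] at h1
      have h2 : dabs (-1 : D) = 1 := by
        funext i; simp [dabs]
      rw [h1, h2, one_mul]
    have hnonneg : ∀ (z : X) (i : Fin 4), 0 ≤ N z i := by
      intro z i
      have h := hNt z (-z)
      rw [add_neg_cancel, hN0', hNneg] at h
      have := Pi.le_def.mp h i
      simp only [Pi.zero_apply, Pi.add_apply] at this
      linarith
    refine ⟨{y : X | sLt (N y) 1}, ?_, ?_, ?_⟩
    · -- neighbourhood of 0
      have hmem : {y : X | sLt (N y) 1} ∈
          {s : Set X | ∃ x : X, ∃ ε : D, sLt 0 ε ∧ s = {y : X | sLt (N (y - x)) ε}} := by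
        refine ⟨0, 1, fun i => by simp, ?_⟩
        ext y
        simp [sub_zero]
      refine (hbasis.isOpen hmem).mem_nhds ?_
      show sLt (N 0) 1
      rw [hN0']
      intro i
      simp
    · -- bounded
      intro U hU
      obtain ⟨t, ⟨x, ε, hε, rfl⟩, h0t, htU⟩ := hbasis.mem_nhds_iff.mp hU
      have h0t' : sLt (N x) ε := by
        have : sLt (N ((0:X) - x)) ε := h0t
        rwa [zero_sub, hNneg] at this
      set c : D := fun i => 2 / (ε i - N x i) with hcdef
      have hδpos : ∀ i, 0 < ε i - N x i := fun i => by
        have := h0t' i; linarith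
      have hc : sLt 0 c := fun i => by
        have := hδpos i
        simp only [hcdef, Pi.zero_apply]
        positivity
      refine ⟨c, hc, fun b hb => ?_⟩
      rw [mem_smul_iff hc]
      refine htU ?_
      show sLt (N (Dinv c • b - x)) ε
      intro i
      have htri := Pi.le_def.mp (hNt (Dinv c • b) (-x)) i
      rw [← sub_eq_add_neg, hNneg] at htri
      have hhom : N (Dinv c • b) i = ((ε i - N x i) / 2) * N b i := by
        rw [hNh (Dinv c) b]
        have habs : dabs (Dinv c) i = (ε i - N x i) / 2 := by
          have h1 := hδpos i
          simp only [dabs, Dinv, hcdef]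
          rw [inv_div, abs_of_pos (by positivity)]
        simp only [Pi.mul_apply, habs]
      have hb1 : N b i < 1 := hb i
      have hb0 : 0 ≤ N b i := hnonneg b i
      have hδi : 0 < ε i - N x i := hδpos i
      have hkey : ((ε i - N x i) / 2) * N b i < ε i - N x i := by
        nlinarith [mul_pos hδi (by linarith : (0:ℝ) < 2 - N b i)]
      simp only [Pi.add_apply] at htri
      linarith [htri, hhom]
    · -- convex
      intro a ha b hb c hc0 hc1
      intro i
      have h1 := Pi.le_def.mp (hNt (c • a) ((1 - c) • b)) i
      have h2 : N (c • a) i = c i * N a i := by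
        rw [hNh c a]
        have : dabs c i = c i := by
          simp only [dabs]
          exact abs_of_nonneg (by simpa using Pi.le_def.mp hc0 i)
        simp only [Pi.mul_apply, this]
      have h3 : N ((1 - c) • b) i = (1 - c i) * N b i := by
        rw [hNh (1 - c) b]
        have hci : c i ≤ 1 := by simpa using Pi.le_def.mp hc1 i
        have : dabs (1 - c) i = 1 - c i := by
          simp only [dabs, Pi.sub_apply, Pi.one_apply]
          exact abs_of_nonneg (by linarith)
        simp only [Pi.mul_apply, this]
      have ha1 : N a i < 1 := ha i
      have hb1 : N b i < 1 := hb i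
      have ha0 : 0 ≤ N a i := hnonneg a i
      have hb0 : 0 ≤ N b i := hnonneg b i
      have hc0i : 0 ≤ c i := by simpa using Pi.le_def.mp hc0 i
      have hc1i : c i ≤ 1 := by simpa using Pi.le_def.mp hc1 i
      show N (c • a + (1 - c) • b) i < 1
      have hcomb : c i * N a i + (1 - c i) * N b i < 1 := by
        rcases lt_or_ge (c i) 1 with h | h
        · nlinarith [mul_pos (by linarith : (0:ℝ) < 1 - c i)
            (by linarith : (0:ℝ) < 1 - N b i),
            mul_nonneg hc0i (by linarith : (0:ℝ) ≤ 1 - N a i)]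
        · have hceq : c i = 1 := le_antisymm hc1i h
          rw [hceq]
          norm_num
          linarith
      simp only [Pi.add_apply] at h1
      linarith [h1, h2, h3]
  · -- Backward: a bounded convex neighbourhood gives a norm.
    rintro ⟨B, hB0, hBbdd, hBconv⟩
    set A : Set X := B ∩ {z : X | -z ∈ B} with hAdef
    have hA0 : A ∈ nhds (0 : X) := by
      refine Filter.inter_mem hB0 ?_
      have hc : Continuous fun z : X => -z := continuous_neg
      exact hc.continuousAt.preimage_mem_nhds (by rwa [neg_zero])
    have h0A : (0 : X) ∈ A := mem_of_mem_nhds hA0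
    have hAconv : H2Convex A := by
      rintro a ⟨ha1, ha2⟩ b ⟨hb1, hb2⟩ c hc0 hc1
      refine ⟨hBconv a ha1 b hb1 c hc0 hc1, ?_⟩
      show -(c • a + (1 - c) • b) ∈ B
      have heq : -(c • a + (1 - c) • b) = c • (-a) + (1 - c) • (-b) := by
        rw [neg_add, smul_neg, smul_neg]
      rw [heq]
      exact hBconv _ ha2 _ hb2 c hc0 hc1
    have hAbal : H2Balanced A := by
      intro z hz c hc
      set lam : D := fun i => (1 + c i) / 2 with hlamdef
      have h1 : ∀ i, |c i| ≤ 1 := fun i => by simpa [dabs] using Pi.le_def.mp hc i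
      have hl0 : (0 : D) ≤ lam := Pi.le_def.mpr fun i => by
        have := abs_le.mp (h1 i)
        simp only [hlamdef, Pi.zero_apply]
        linarith [this.1]
      have hl1 : lam ≤ 1 := Pi.le_def.mpr fun i => by
        have := abs_le.mp (h1 i)
        simp only [hlamdef, Pi.one_apply]
        linarith [this.2]
      have hmz : -z ∈ A := ⟨hz.2, by simpa using hz.1⟩
      have hcv := hAconv z hz (-z) hmz lam hl0 hl1
      have heq : lam • z + (1 - lam) • (-z) = c • z := by
        rw [smul_neg, ← sub_eq_add_neg, ← sub_smul]
        congr 1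
        funext i
        simp only [hlamdef, Pi.sub_apply, Pi.one_apply]
        ring
      rwa [heq] at hcv
    have hAbdd : H2Bounded A := fun U hU => by
      obtain ⟨c, hc1, hc2⟩ := hBbdd U hU
      exact ⟨c, hc1, fun z hz => hc2 hz.1⟩
    have habs : ∀ y : X, ∃ α : D, InS A y α := exists_InS_of_nhds hA0
    have hzeroN : minkowski A (0 : X) = 0 := funext fun i => mink_zero h0A i
    refine ⟨minkowski A, ⟨?_, ?_, ?_⟩, ?_⟩
    · exact fun x => ⟨fun h => mink_definite hAbal hAconv hA0 hAbdd h,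
        fun h => by rw [h]; exact hzeroN⟩
    · intro c x
      funext i
      rw [mink_homog hAbal hAconv h0A habs c x i]
      rfl
    · intro x y
      exact Pi.le_def.mpr fun i => by
        simpa using mink_add hAconv habs x y i
    · refine TopologicalSpace.isTopologicalBasis_of_isOpen_of_nhds ?_ ?_
      · rintro s ⟨x, ε, hε, rfl⟩
        rw [isOpen_iff_mem_nhds]
        rintro y₀ hy₀
        have hy₀' : sLt (minkowski A (y₀ - x)) ε := hy₀
        set δ : D := fun i => ε i - minkowski A (y₀ - x) i with hδdef
        have hδ : sLt 0 δ := fun i => by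
          have := hy₀' i
          simp only [hδdef, Pi.zero_apply]
          linarith
        have hT : (fun z : X => z - y₀) ⁻¹' {w : X | sLt (minkowski A w) δ}
            ∈ nhds y₀ := by
          have hc : Continuous fun z : X => z - y₀ := continuous_id.sub continuous_const
          refine hc.continuousAt.preimage_mem_nhds ?_
          have h0 : y₀ - y₀ = (0 : X) := sub_self y₀
          rw [h0]
          exact mink_ball_mem_nhds hA0 hδ
        refine Filter.mem_of_superset hT fun z hz => ?_
        intro i
        have h1 : minkowski A (z - x) i
            ≤ minkowski A (z - y₀) i + minkowski A (y₀ - x) i := by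
          have := mink_add hAconv habs (z - y₀) (y₀ - x) i
          rwa [sub_add_sub_cancel] at this
        have h2 : minkowski A (z - y₀) i < δ i := hz i
        have h3 : δ i = ε i - minkowski A (y₀ - x) i := rfl
        show minkowski A (z - x) i < ε i
        linarith
      · intro a u hau hu
        have hUa : u ∈ nhds a := hu.mem_nhds hau
        have hV : (fun z : X => z + a) ⁻¹' u ∈ nhds (0 : X) := by
          have hc : Continuous fun z : X => z + a := continuous_id.add continuous_const
          exact hc.continuousAt.preimage_mem_nhds (by simpa using hUa)
        obtain ⟨W, hW, hWV, hWbal⟩ := exists_balanced_nhds hV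
        obtain ⟨c, hc, hAc⟩ := hAbdd W hW
        refine ⟨{y : X | sLt (minkowski A (y - a)) (Dinv c)},
          ⟨a, Dinv c, Dinv_pos hc, rfl⟩, ?_, ?_⟩
        · show sLt (minkowski A (a - a)) (Dinv c)
          rw [sub_self, hzeroN]
          intro i
          simpa using Dinv_pos hc i
        · intro y hy
          have hyW : y - a ∈ W :=
            mem_balanced_of_small hAconv hA0 hWbal hc hAc fun i => hy i
          have := hWV hyW
          simpa [sub_add_cancel] using this
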